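/- For every constant C3 > 0 there exist constants C'' > 0 and c > 0 such that, for all sufficiently large n divisible by 4 and every integer i ≥ 1 with t0 + i·√n ≤ n/8, one has q_i ≤ C'' · p_i^{1 − c/log n}, where p_i = ∑_{j ∈ B_i} Pr(G = n/4 − j) and q_i = ∑_{j ∈ B_i} Pr(G = n/4 − j) · exp( 16·j² / (C3·n·log n) ), with B_i = { j ∈ ℤ : t0 + (i−1)·√n ≤ |j| < t0 + i·√n }. -/

import Mathlib

open scoped Classical
open Finset Filter

/-- `pG n k` is `Pr(G = k)` for the hypergeometric random variable `G(n, n/2, n/2)`,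
extended by `0` outside `{0, …, n/2}` (here `k : ℤ`). -/
noncomputable def pG (n : ℕ) (k : ℤ) : ℝ :=
  if 0 ≤ k then (((n / 2).choose k.toNat : ℝ)) ^ 2 / (n.choose (n / 2) : ℝ) else 0

/-- `t0 = √n · (log n)^{1/4}`. -/
noncomputable def t0 (n : ℕ) : ℝ := Real.sqrt n * Real.log n ^ ((1 : ℝ) / 4)

/-- The band `B_i = { j ∈ ℤ : t0 + (i−1)√n ≤ |j| < t0 + i√n }`. -/
noncomputable def band (n : ℕ) (i : ℕ) : Finset ℤ :=
  (Finset.Icc (-(n : ℤ)) (n : ℤ)).filter (fun j : ℤ =>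
    t0 n + ((i : ℝ) - 1) * Real.sqrt n ≤ |(j : ℝ)| ∧ |(j : ℝ)| < t0 n + (i : ℝ) * Real.sqrt n)

/-- `p_i = ∑_{j ∈ B_i} Pr(G = n/4 − j)`. -/
noncomputable def pBand (n : ℕ) (i : ℕ) : ℝ :=
  ∑ j ∈ band n i, pG n (((n / 4 : ℕ) : ℤ) - j)

/-- `q_i = ∑_{j ∈ B_i} Pr(G = n/4 − j) · exp(16j²/(C3 n log n))`. -/
noncomputable def qBand (C3 : ℝ) (n : ℕ) (i : ℕ) : ℝ :=
  ∑ j ∈ band n i,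
    pG n (((n / 4 : ℕ) : ℤ) - j) * Real.exp (16 * (j : ℝ) ^ 2 / (C3 * n * Real.log n))

set_option maxHeartbeats 1000000


lemma lemA (a : ℕ) : ∀ s : ℕ, s ≤ a →
    (((2*a).choose (a - s) : ℕ) : ℝ) ≤ ((2*a).choose a : ℝ) * Real.exp (-(s:ℝ)^2 / (2*a)) := by
  intro s
  induction s with
  | zero => intro _; simp
  | succ s ih =>
    intro hs
    have hs' : s ≤ a := by omega
    have ha : 1 ≤ a := by omega
    have key : (2*a).choose (a - (s+1)) * (a + s + 1) = (2*a).choose (a - s) * (a - s) := by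
      have h1 : a - (s+1) + 1 = a - s := by omega
      have h2 : 2*a - (a - (s+1)) = a + s + 1 := by omega
      have := Nat.choose_succ_right_eq (2*a) (a - (s+1))
      rw [h1, h2] at this
      omega
    have keyR : ((2*a).choose (a - (s+1)) : ℝ) * ((a:ℝ) + s + 1) =
        ((2*a).choose (a - s) : ℝ) * ((a:ℝ) - s) := by
      have := congrArg (fun t : ℕ => (t : ℝ)) key
      push_cast at this
      rw [Nat.cast_sub hs'] at this
      push_cast at this
      linarith [this]
    have hden : (0:ℝ) < (a:ℝ) + s + 1 := by positivity
    have heq : ((2*a).choose (a - (s+1)) : ℝ) =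
        ((2*a).choose (a - s) : ℝ) * (((a:ℝ) - s) / ((a:ℝ) + s + 1)) := by
      field_simp
      linarith [keyR]
    have hratio : ((a:ℝ) - s) / ((a:ℝ) + s + 1) ≤ Real.exp (-(2*(s:ℝ)+1) / (2*a)) := by
      have hA : (0:ℝ) < 2*(a:ℝ) := by positivity
      have h1 : ((a:ℝ) - s) / ((a:ℝ) + s + 1) = 1 - (2*(s:ℝ)+1)/((a:ℝ)+s+1) := by
        field_simp; ring
      have h2 : (2*(s:ℝ)+1)/(2*(a:ℝ)) ≤ (2*(s:ℝ)+1)/((a:ℝ)+s+1) := by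
        apply div_le_div_of_nonneg_left (by positivity) hden
        have : (s:ℝ) + 1 ≤ (a:ℝ) := by exact_mod_cast Nat.cast_le.mpr hs
        linarith
      have h3 := Real.add_one_le_exp (-(2*(s:ℝ)+1) / (2*a))
      rw [h1]
      have : 1 - (2*(s:ℝ)+1)/(2*(a:ℝ)) ≤ Real.exp (-(2*(s:ℝ)+1) / (2*a)) := by
        rw [neg_div] at h3 ⊢; linarith
      linarith
    have hnn : (0:ℝ) ≤ ((a:ℝ) - s) / ((a:ℝ) + s + 1) := by
      apply div_nonneg _ (le_of_lt hden)
      have : (s:ℝ) ≤ (a:ℝ) := by exact_mod_cast hs'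
      linarith
    calc ((2*a).choose (a - (s+1)) : ℝ)
        = ((2*a).choose (a - s) : ℝ) * (((a:ℝ) - s) / ((a:ℝ) + s + 1)) := heq
      _ ≤ (((2*a).choose a : ℝ) * Real.exp (-(s:ℝ)^2 / (2*a))) * (((a:ℝ) - s) / ((a:ℝ) + s + 1)) := by
          apply mul_le_mul_of_nonneg_right (ih hs') hnn
      _ ≤ (((2*a).choose a : ℝ) * Real.exp (-(s:ℝ)^2 / (2*a))) * Real.exp (-(2*(s:ℝ)+1) / (2*a)) := by
          apply mul_le_mul_of_nonneg_left hratio (by positivity)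
      _ = ((2*a).choose a : ℝ) * Real.exp (-((s:ℝ)+1)^2 / (2*a)) := by
          rw [mul_assoc, ← Real.exp_add]
          congr 1
          have hA : (2*(a:ℝ)) ≠ 0 := by positivity
          field_simp
          ring
      _ = ((2*a).choose a : ℝ) * Real.exp (-((s+1:ℕ):ℝ)^2 / (2*a)) := by push_cast; ring_nf


lemma lemB (m k : ℕ) : ((2*m).choose k)^2 ≤ (4*m).choose (2*m) := by
  rcases le_or_gt k (2*m) with hk | hk
  · have hv : (4*m).choose (2*m) = ∑ ij ∈ Finset.HasAntidiagonal.antidiagonal (2*m),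
        (2*m).choose ij.1 * (2*m).choose ij.2 := by
      have := Nat.add_choose_eq (2*m) (2*m) (2*m)
      rw [show 2*m + 2*m = 4*m by ring] at this
      exact this
    rw [hv]
    have hmem : (k, 2*m - k) ∈ Finset.HasAntidiagonal.antidiagonal (2*m) := by
      rw [Finset.HasAntidiagonal.mem_antidiagonal]; omega
    have hsym : (2*m).choose (2*m - k) = (2*m).choose k := Nat.choose_symm hk
    calc ((2*m).choose k)^2 = (2*m).choose k * (2*m).choose (2*m - k) := by
          rw [hsym]; ring
      _ ≤ _ := Finset.single_le_sum (f := fun ij => (2*m).choose ij.1 * (2*m).choose ij.2) (fun ij _ => Nat.zero_le _) hmem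
  · rw [Nat.choose_eq_zero_of_lt hk]; simp [Nat.zero_le]

lemma pG_nonneg (n : ℕ) (k : ℤ) : 0 ≤ pG n k := by
  unfold pG; split <;> positivity

lemma lemC (m : ℕ) (hm : 1 ≤ m) (j : ℤ) (hj : j.natAbs ≤ m) :
    pG (4*m) ((m:ℤ) - j) ≤ Real.exp (-(j:ℝ)^2 / m) := by
  set s := j.natAbs with hs
  have hd2 : 4*m/2 = 2*m := by omega
  have hk : (0:ℤ) ≤ (m:ℤ) - j := by omega
  have hchoose : (2*m).choose ((m:ℤ)-j).toNat = (2*m).choose (m - s) := by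
    rcases le_or_gt 0 j with hj0 | hj0
    · congr 1; omega
    · have htn : ((m:ℤ)-j).toNat = m + s := by omega
      rw [htn]
      have : (2*m) - (m + s) = m - s := by omega
      rw [← this, Nat.choose_symm (by omega)]
  have hA := lemA m s hj
  have hposB : (0:ℝ) < ((4*m).choose (2*m) : ℝ) := by
    have : 0 < (4*m).choose (2*m) := Nat.choose_pos (by omega)
    exact_mod_cast this
  have hBR : (((2*m).choose m : ℝ))^2 ≤ ((4*m).choose (2*m) : ℝ) := by
    exact_mod_cast lemB m m
  have hsq : ((j:ℝ))^2 = ((s:ℝ))^2 := by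
    rw [hs, Nat.cast_natAbs, Int.cast_abs, sq_abs]
  unfold pG
  rw [if_pos hk, hd2, hchoose]
  rw [div_le_iff₀ hposB]
  have hcnn : (0:ℝ) ≤ ((2*m).choose (m - s) : ℝ) := by positivity
  calc ((2*m).choose (m - s) : ℝ)^2
      ≤ (((2*m).choose m : ℝ) * Real.exp (-(s:ℝ)^2 / (2*m)))^2 := by
        apply pow_le_pow_left₀ hcnn hA
    _ = (((2*m).choose m : ℝ))^2 * (Real.exp (-(s:ℝ)^2 / (2*m)) * Real.exp (-(s:ℝ)^2 / (2*m))) := by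
        ring
    _ ≤ ((4*m).choose (2*m) : ℝ) * Real.exp (-(j:ℝ)^2 / m) := by
        apply mul_le_mul hBR ?_ (by positivity) (le_of_lt hposB)
        rw [← Real.exp_add, hsq]
        apply Real.exp_le_exp.mpr
        have hmpos : (0:ℝ) < (m:ℝ) := by exact_mod_cast hm
        apply le_of_eq
        have h2m : (2:ℝ)*(m:ℝ) ≠ 0 := by positivity
        field_simp
        ring
    _ = Real.exp (-(j:ℝ)^2 / m) * ((4*m).choose (2*m) : ℝ) := by ring

theorem band_contribution (C3 : ℝ) (hC3 : 0 < C3) :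
    ∃ C'' : ℝ, 0 < C'' ∧ ∃ c : ℝ, 0 < c ∧ ∃ N : ℕ, ∀ n : ℕ, N ≤ n → 4 ∣ n →
      ∀ i : ℕ, 1 ≤ i → t0 n + (i : ℝ) * Real.sqrt n ≤ (n : ℝ) / 8 →
        qBand C3 n i ≤ C'' * pBand n i ^ (1 - c / Real.log n) := by
  set c : ℝ := 16 / C3 with hc
  have hcpos : 0 < c := by positivity
  refine ⟨Real.exp (2*c+1), Real.exp_pos _, c, hcpos, ⌈Real.exp c⌉₊ + 4, ?_⟩
  intro n hn h4 i hi hub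
  obtain ⟨m, hm⟩ := h4
  have hn4 : 4 ≤ n := by omega
  have hm1 : 1 ≤ m := by omega
  have hn0 : (0:ℝ) < n := by exact_mod_cast (by omega : 0 < n)
  have hm0 : (0:ℝ) < m := by exact_mod_cast hm1
  have hnm : (n:ℝ) = 4*(m:ℝ) := by exact_mod_cast hm
  have hn4m : n / 4 = m := by omega
  -- logs
  have hL1 : 1 ≤ Real.log n := by
    rw [Real.le_log_iff_exp_le hn0]
    have := Real.exp_one_lt_d9
    have h4' : (4:ℝ) ≤ n := by exact_mod_cast hn4
    linarith
  have hL0 : 0 < Real.log n := by linarith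
  have hcL : c < Real.log n := by
    rw [Real.lt_log_iff_exp_lt hn0]
    have h1 : Real.exp c ≤ (⌈Real.exp c⌉₊ : ℝ) := Nat.le_ceil _
    have h2 : ((⌈Real.exp c⌉₊ + 4 : ℕ) : ℝ) ≤ n := by exact_mod_cast hn
    push_cast at h2
    linarith
  set L := Real.log n with hLdef
  -- T and T'
  set T : ℝ := t0 n + ((i:ℝ) - 1) * Real.sqrt n with hT
  set T' : ℝ := t0 n + (i:ℝ) * Real.sqrt n with hT'
  have hsqrt_nn : 0 ≤ Real.sqrt n := Real.sqrt_nonneg _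
  have ht0s : Real.sqrt n ≤ t0 n := by
    unfold t0
    nth_rewrite 1 [← mul_one (Real.sqrt n)]
    apply mul_le_mul_of_nonneg_left _ hsqrt_nn
    exact Real.one_le_rpow hL1 (by norm_num)
  have hi1 : (1:ℝ) ≤ (i:ℝ) := by exact_mod_cast hi
  have hT0 : 0 ≤ T := by
    have : 0 ≤ ((i:ℝ) - 1) * Real.sqrt n := by
      apply mul_nonneg (by linarith) hsqrt_nn
    have h2 : 0 ≤ t0 n := le_trans hsqrt_nn ht0s
    rw [hT]; linarith
  have hsT : Real.sqrt n ≤ T := by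
    have : 0 ≤ ((i:ℝ) - 1) * Real.sqrt n := mul_nonneg (by linarith) hsqrt_nn
    rw [hT]; linarith
  have hTT' : T' = T + Real.sqrt n := by rw [hT, hT']; ring
  have hT'2 : T' ≤ 2*T := by rw [hTT']; linarith
  have hT'0 : 0 ≤ T' := by rw [hTT']; linarith
  -- band member facts
  have hband : ∀ j ∈ band n i, T ≤ |(j:ℝ)| ∧ |(j:ℝ)| < T' := by
    intro j hj
    exact (Finset.mem_filter.mp hj).2
  have habs : ∀ j : ℤ, (j.natAbs : ℝ) = |(j:ℝ)| := by
    intro j; rw [Nat.cast_natAbs, Int.cast_abs]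
  have hnatAbs : ∀ j ∈ band n i, j.natAbs ≤ m := by
    intro j hj
    have h2 := (hband j hj).2
    have hub' : T' ≤ (n:ℝ)/8 := hub
    have : (j.natAbs : ℝ) < (m:ℝ) := by
      rw [habs]
      have : (n:ℝ)/8 = (m:ℝ)/2 := by rw [hnm]; ring
      nlinarith [hm0]
    exact le_of_lt (by exact_mod_cast this)
  -- per-term bound
  have hterm : ∀ j ∈ band n i, pG n (((n / 4 : ℕ) : ℤ) - j) ≤ Real.exp (-(T^2)/m) := by
    intro j hj
    have h1 : (((n / 4 : ℕ) : ℤ)) = (m:ℤ) := by exact_mod_cast hn4m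
    rw [h1, hm]
    calc pG (4*m) ((m:ℤ) - j) ≤ Real.exp (-(j:ℝ)^2 / m) := lemC m hm1 j (hnatAbs j hj)
      _ ≤ Real.exp (-(T^2)/m) := by
          apply Real.exp_le_exp.mpr
          rw [neg_div, neg_div]
          apply neg_le_neg
          have hTj : T^2 ≤ (j:ℝ)^2 := by
            have := (hband j hj).1
            calc T^2 ≤ |(j:ℝ)|^2 := by nlinarith
              _ = (j:ℝ)^2 := sq_abs _
          gcongr
  -- card bound
  have hcard : ((band n i).card : ℝ) ≤ 2*(n:ℝ)+1 := by
    have h1 : (band n i).card ≤ (Finset.Icc (-(n : ℤ)) (n : ℤ)).card :=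
      Finset.card_le_card (Finset.filter_subset _ _)
    have h2 : (Finset.Icc (-(n : ℤ)) (n : ℤ)).card = 2*n+1 := by
      rw [Int.card_Icc]; omega
    have : (band n i).card ≤ 2*n+1 := by omega
    exact_mod_cast this
  set P : ℝ := (2*(n:ℝ)+1) * Real.exp (-(T^2)/m) with hPdef
  have hPpos : 0 < P := by positivity
  have hpP : pBand n i ≤ P := by
    unfold pBand
    calc ∑ j ∈ band n i, pG n (((n / 4 : ℕ) : ℤ) - j)
        ≤ (band n i).card • Real.exp (-(T^2)/m) := Finset.sum_le_card_nsmul _ _ _ hterm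
      _ = ((band n i).card : ℝ) * Real.exp (-(T^2)/m) := by rw [nsmul_eq_mul]
      _ ≤ P := by rw [hPdef]; apply mul_le_mul_of_nonneg_right hcard (Real.exp_nonneg _)
  set E : ℝ := Real.exp (16*T'^2/(C3*(n:ℝ)*L)) with hEdef
  have hqE : qBand C3 n i ≤ pBand n i * E := by
    unfold qBand pBand
    rw [Finset.sum_mul]
    apply Finset.sum_le_sum
    intro j hj
    apply mul_le_mul_of_nonneg_left _ (pG_nonneg _ _)
    rw [hEdef]
    apply Real.exp_le_exp.mpr
    have hj2 : (j:ℝ)^2 ≤ T'^2 := by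
      have h2 := (hband j hj).2
      have := abs_nonneg ((j:ℝ))
      calc (j:ℝ)^2 = |(j:ℝ)|^2 := (sq_abs _).symm
        _ ≤ T'^2 := by nlinarith
    gcongr
  -- main case split
  have hpnn : (0:ℝ) ≤ pBand n i := by
    unfold pBand
    exact Finset.sum_nonneg (fun j _ => pG_nonneg n _)
  rcases eq_or_lt_of_le hpnn with hp0 | hp
  · -- pBand = 0
    have hq0 : qBand C3 n i = 0 := by
      have hE0 : 0 < E := Real.exp_pos _
      have h1 : qBand C3 n i ≤ 0 := by
        rw [← hp0] at hqE
        simpa using hqE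
      have h2 : 0 ≤ qBand C3 n i :=
        Finset.sum_nonneg (fun j _ => mul_nonneg (pG_nonneg _ _) (Real.exp_nonneg _))
      linarith
    rw [hq0, ← hp0]
    have hγ1 : c / L < 1 := (div_lt_one hL0).mpr hcL
    rw [Real.zero_rpow (by linarith : (0:ℝ) < 1 - c / L).ne']
    simp
  · -- pBand > 0
    have hγ1 : c / L < 1 := (div_lt_one hL0).mpr hcL
    have hγ0 : 0 < c / L := by positivity
    -- key: E ≤ exp(2c+1) * P^(-(c/L))
    have hkey : E ≤ Real.exp (2*c+1) * P ^ (-(c/L)) := by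
      rw [Real.rpow_def_of_pos hPpos, ← Real.exp_add, hEdef]
      apply Real.exp_le_exp.mpr
      have hlogP : Real.log P = Real.log (2*(n:ℝ)+1) + (-(T^2)/m) := by
        rw [hPdef, Real.log_mul (by positivity) (Real.exp_ne_zero _), Real.log_exp]
      rw [hlogP]
      have hA : (c/L) * Real.log (2*(n:ℝ)+1) ≤ 2*c := by
        have h1 : Real.log (2*(n:ℝ)+1) ≤ 2*L := by
          have h4' : (4:ℝ) ≤ n := by exact_mod_cast hn4
          have h2 : (2*(n:ℝ)+1) ≤ (n:ℝ)^2 := by nlinarith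
          calc Real.log (2*(n:ℝ)+1) ≤ Real.log ((n:ℝ)^2) := by
                apply Real.log_le_log (by positivity) h2
            _ = 2*L := by rw [Real.log_pow]; push_cast; rw [hLdef]
        calc (c/L) * Real.log (2*(n:ℝ)+1) ≤ (c/L) * (2*L) := by
              apply mul_le_mul_of_nonneg_left h1 (le_of_lt hγ0)
          _ = 2*c := by field_simp
      have hB : 16*T'^2/(C3*(n:ℝ)*L) ≤ (c/L) * (T^2/m) := by
        have hT'4 : T'^2 ≤ 4*T^2 := by nlinarith
        calc 16*T'^2/(C3*(n:ℝ)*L) ≤ 16*(4*T^2)/(C3*(n:ℝ)*L) := by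
              apply div_le_div_of_nonneg_right ?_ (by positivity)
              linarith
          _ = (c/L) * (T^2/m) := by
              rw [hc, hnm]
              field_simp
      have hexp : 2*c+1 + (Real.log (2*(n:ℝ)+1) + -T^2/(m:ℝ)) * -(c/L)
          = 2*c+1 - (c/L)*Real.log (2*(n:ℝ)+1) + (c/L)*(T^2/(m:ℝ)) := by ring
      rw [hexp]
      linarith [hA, hB]
    -- conclude
    have hstep : pBand n i ^ (-(c/L)) ≥ P ^ (-(c/L)) :=
      Real.rpow_le_rpow_of_nonpos hp hpP (by linarith)
    calc qBand C3 n i ≤ pBand n i * E := hqE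
      _ ≤ pBand n i * (Real.exp (2*c+1) * P ^ (-(c/L))) := by
          apply mul_le_mul_of_nonneg_left hkey (le_of_lt hp)
      _ ≤ pBand n i * (Real.exp (2*c+1) * pBand n i ^ (-(c/L))) := by
          apply mul_le_mul_of_nonneg_left _ (le_of_lt hp)
          apply mul_le_mul_of_nonneg_left hstep (Real.exp_nonneg _)
      _ = Real.exp (2*c+1) * (pBand n i ^ (1:ℝ) * pBand n i ^ (-(c/L))) := by
          rw [Real.rpow_one]; ring
      _ = Real.exp (2*c+1) * pBand n i ^ (1 - c/L) := by
          rw [← Real.rpow_add hp, show (1:ℝ) + -(c/L) = 1 - c/L by ring]
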